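/- Row insertion of a letter into a semistandard Young tableau produces a semistandard Young tableau whose shape is obtained from the original shape by adding exactly one box. -/

import Mathlib

/-- RSK row insertion of `k` into a tableau (a list of rows, top row first):
find the leftmost cell of the first row whose value is strictly greater than
`k`; if none exists append `k` to the row, otherwise replace it by `k` and
insert the bumped value into the next row by the same rule. -/
def insertTab : List (List ℕ) → ℕ → List (List ℕ)
  | [], k => [[k]]
  | row :: rest, k =>
    match row.findIdx? (fun x => decide (k < x)) with
    | none => (row ++ [k]) :: rest
    | some i => row.set i k :: insertTab rest (row.getD i 0)

/-- `T` is a semistandard Young tableau: row lengths weakly decrease (so the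
shape is a partition), rows are weakly increasing, and columns are strictly
increasing. -/
def IsSSYTList (T : List (List ℕ)) : Prop :=
  (∀ row ∈ T, row ≠ []) ∧
  (∀ i, i + 1 < T.length → (T.getD (i + 1) []).length ≤ (T.getD i []).length) ∧
  (∀ row ∈ T, row.Chain' (· ≤ ·)) ∧
  (∀ i j, i + 1 < T.length → j < (T.getD (i + 1) []).length →
    (T.getD i []).getD j 0 < (T.getD (i + 1) []).getD j 0)

namespace InsertTabAux

lemma getD_set_self {l : List ℕ} {i : ℕ} (h : i < l.length) (a : ℕ) :
    (l.set i a).getD i 0 = a := by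
  simp [List.getD_eq_getElem?_getD, List.getElem?_set, h]

lemma getD_set_ne {l : List ℕ} {i j : ℕ} (h : i ≠ j) (a : ℕ) :
    (l.set i a).getD j 0 = l.getD j 0 := by
  simp [List.getD_eq_getElem?_getD, List.getElem?_set, h]

lemma chain'_le_iff {l : List ℕ} :
    l.Chain' (· ≤ ·) ↔ ∀ i, i + 1 < l.length → l.getD i 0 ≤ l.getD (i + 1) 0 := by
  rw [List.Chain', List.isChain_iff_getElem]
  constructor
  · intro h i hi
    rw [List.getD_eq_getElem _ _ (by omega), List.getD_eq_getElem _ _ hi]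
    exact h i (by omega)
  · intro h i hi
    have h2 := h i (by omega)
    rwa [List.getD_eq_getElem _ _ (by omega), List.getD_eq_getElem _ _ (by omega)] at h2

/-- unpack IsSSYTList of a cons. -/
lemma ssyt_cons {row : List ℕ} {rest : List (List ℕ)}
    (h : IsSSYTList (row :: rest)) :
    row ≠ [] ∧ row.Chain' (· ≤ ·) ∧ IsSSYTList rest ∧
      (rest ≠ [] → (rest.getD 0 []).length ≤ row.length ∧
        ∀ j < (rest.getD 0 []).length, row.getD j 0 < (rest.getD 0 []).getD j 0) := by
  obtain ⟨h1, h2, h3, h4⟩ := h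
  refine ⟨h1 _ (by simp), h3 _ (by simp), ⟨?_, ?_, ?_, ?_⟩, ?_⟩
  · exact fun r hr => h1 r (List.mem_cons_of_mem _ hr)
  · intro i hi
    exact h2 (i + 1) (by simpa using Nat.succ_lt_succ hi)
  · exact fun r hr => h3 r (List.mem_cons_of_mem _ hr)
  · intro i j hi hj
    exact h4 (i + 1) j (by simpa using Nat.succ_lt_succ hi) hj
  · intro hne
    have hlen : (0 : ℕ) + 1 < (row :: rest).length := by
      simp [Nat.pos_of_ne_zero, List.length_pos_iff.mpr hne]
    exact ⟨h2 0 hlen, fun j hj => h4 0 j hlen hj⟩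

/-- pack IsSSYTList of a cons. -/
lemma ssyt_cons_intro {row : List ℕ} {rest : List (List ℕ)}
    (h1 : row ≠ []) (h2 : row.Chain' (· ≤ ·)) (h3 : IsSSYTList rest)
    (h4 : rest ≠ [] → (rest.getD 0 []).length ≤ row.length ∧
        ∀ j < (rest.getD 0 []).length, row.getD j 0 < (rest.getD 0 []).getD j 0) :
    IsSSYTList (row :: rest) := by
  obtain ⟨g1, g2, g3, g4⟩ := h3
  refine ⟨?_, ?_, ?_, ?_⟩
  · intro r hr
    rcases List.mem_cons.mp hr with rfl | h
    · exact h1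
    · exact g1 r h
  · intro i hi
    match i with
    | 0 =>
      have hne : rest ≠ [] := List.ne_nil_of_length_pos (by simp at hi; omega)
      simpa using (h4 hne).1
    | i + 1 =>
      have : i + 1 < rest.length := by simpa using hi
      simpa using g2 i this
  · intro r hr
    rcases List.mem_cons.mp hr with rfl | h
    · exact h2
    · exact g3 r h
  · intro i j hi hj
    match i with
    | 0 =>
      have hne : rest ≠ [] := List.ne_nil_of_length_pos (by simp at hi; omega)
      simp only [List.getD_cons_zero, List.getD_cons_succ] at hj ⊢
      exact (h4 hne).2 j hj
    | i + 1 =>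
      have : i + 1 < rest.length := by simpa using hi
      simp only [List.getD_cons_succ] at hj ⊢
      exact g4 i j this hj

lemma findIdx_some_facts {row : List ℕ} {k i : ℕ}
    (h : row.findIdx? (fun x => decide (k < x)) = some i) :
    i < row.length ∧ k < row.getD i 0 ∧ ∀ j < i, row.getD j 0 ≤ k := by
  rw [List.findIdx?_eq_some_iff_getElem] at h
  obtain ⟨hi, hp, hmin⟩ := h
  refine ⟨hi, ?_, ?_⟩
  · rw [List.getD_eq_getElem _ _ hi]
    simpa using hp
  · intro j hj
    have := hmin j hj
    rw [List.getD_eq_getElem _ _ (by omega)]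
    simpa using this

lemma findIdx_none_facts {row : List ℕ} {k : ℕ}
    (h : row.findIdx? (fun x => decide (k < x)) = none) :
    ∀ x ∈ row, x ≤ k := by
  rw [List.findIdx?_eq_none_iff] at h
  intro x hx
  simpa using h x hx

lemma chain'_set {l : List ℕ} {i k : ℕ} (hl : l.Chain' (· ≤ ·))
    (hi : i < l.length) (h1 : ∀ j < i, l.getD j 0 ≤ k) (h2 : k < l.getD i 0) :
    (l.set i k).Chain' (· ≤ ·) := by
  rw [chain'_le_iff] at hl ⊢
  intro j hj
  rw [List.length_set] at hj
  rcases eq_or_ne i j with rfl | hij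
  · rw [getD_set_self hi, getD_set_ne (by omega)]
    exact le_trans (le_of_lt h2) (hl i hj)
  · rw [getD_set_ne hij]
    rcases eq_or_ne i (j + 1) with rfl | hij2
    · rw [getD_set_self hi]
      exact h1 j (by omega)
    · rw [getD_set_ne hij2]
      exact hl j hj

lemma getD_append_last {l : List ℕ} (k : ℕ) : (l ++ [k]).getD l.length 0 = k := by
  rw [List.getD_append_right _ _ _ _ (le_refl _)]
  simp

lemma getD_big {l : List ℕ} {j : ℕ} (h : l.length ≤ j) : l.getD j 0 = 0 :=
  List.getD_eq_default _ _ h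

/-- The main induction. -/
lemma insert_main (T : List (List ℕ)) (k : ℕ) (hT : IsSSYTList T) :
    IsSSYTList (insertTab T k) ∧
      ((insertTab T k).map List.length).sum = (T.map List.length).sum + 1 ∧
      (∀ i, (T.map List.length).getD i 0 ≤
        ((insertTab T k).map List.length).getD i 0) ∧
      insertTab T k ≠ [] ∧
      ∃ p, p ≤ (T.getD 0 []).length ∧
        (∀ j < p, (T.getD 0 []).getD j 0 ≤ k) ∧
        ((insertTab T k).getD 0 []).length = max (T.getD 0 []).length (p + 1) ∧
        (∀ j, j ≠ p → ((insertTab T k).getD 0 []).getD j 0 = (T.getD 0 []).getD j 0) ∧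
        ((insertTab T k).getD 0 []).getD p 0 = k := by
  induction T generalizing k with
  | nil =>
    refine ⟨?_, by simp [insertTab], ?_, by simp [insertTab], 0, by simp, by simp,
      by simp [insertTab], ?_, by simp [insertTab]⟩
    · exact ⟨by simp [insertTab], by simp [insertTab], by simp [insertTab, List.Chain'], by simp [insertTab]⟩
    · intro i
      match i with
      | 0 => simp [insertTab]
      | i + 1 => simp [insertTab]
    · intro j hj
      match j with
      | 0 => omega
      | j + 1 => simp [insertTab]
  | cons row rest ih =>
    obtain ⟨hne, hch, hrest, hrel⟩ := ssyt_cons hT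
    cases hfi : row.findIdx? (fun x => decide (k < x)) with
    | none =>
      have hins : insertTab (row :: rest) k = (row ++ [k]) :: rest := by
        simp [insertTab, hfi]
      have hle : ∀ x ∈ row, x ≤ k := findIdx_none_facts hfi
      have hchain : (row ++ [k]).Chain' (· ≤ ·) := by
        rw [List.Chain', List.isChain_append]
        refine ⟨hch, by simp, ?_⟩
        intro x hx y hy
        simp at hy
        subst hy
        exact hle x (List.mem_of_mem_getLast? hx)
      rw [hins]
      refine ⟨?_, by simp; omega, ?_, by simp, row.length, ?_, ?_, by simp, ?_, by simpa using getD_append_last k⟩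
      · refine ssyt_cons_intro (by simp) hchain hrest ?_
        intro hne'
        obtain ⟨hl1, hl2⟩ := hrel hne'
        refine ⟨by simp only [List.length_append, List.length_singleton]; omega, ?_⟩
        intro j hj
        rw [List.getD_append _ _ _ _ (by omega)]
        exact hl2 j hj
      · intro i
        match i with
        | 0 => simp
        | i + 1 => simp
      · simp
      · intro j hj
        simp only [List.getD_cons_zero]
        rw [List.getD_eq_getElem _ _ hj]
        exact hle _ (List.getElem_mem _)
      · intro j hj
        simp only [List.getD_cons_zero]
        rcases lt_or_ge j row.length with h | h
        · rw [List.getD_append _ _ _ _ h]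
        · rw [getD_big (by simpa using by omega), getD_big h]
    | some i =>
      obtain ⟨hi, hki, hmin⟩ := findIdx_some_facts hfi
      set b := row.getD i 0 with hb
      have hins : insertTab (row :: rest) k = row.set i k :: insertTab rest b := by
        simp only [insertTab, hfi, hb]
      obtain ⟨ih1, ih2, ih3, ih4, p, hp, hpmin, hplen, hpne, hpval⟩ := ih b hrest
      -- p ≤ i
      have hpi : p ≤ i := by
        by_contra hc
        push_neg at hc
        -- i < p ≤ (rest.getD 0 []).length, so i < length of rest's first row
        have hilen : i < (rest.getD 0 []).length := lt_of_lt_of_le hc hp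
        have hrne : rest ≠ [] := by
          intro h; rw [h] at hilen; simp at hilen
        have := (hrel hrne).2 i hilen
        have := hpmin i hc
        omega
      rw [hins]
      have hsetlen : (row.set i k).length = row.length := List.length_set ..
      refine ⟨?_, ?_, ?_, by simp, i, le_of_lt hi, hmin, ?_, ?_, ?_⟩
      · -- IsSSYTList
        refine ssyt_cons_intro ?_ (chain'_set hch hi hmin hki) ih1 ?_
        · intro h
          have : (row.set i k).length = 0 := by rw [h]; simp
          rw [hsetlen] at this
          omega
        · intro hne'
          constructor
          · -- length of new second row ≤ length of new first row
            rw [hplen, hsetlen]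
            have hple : p + 1 ≤ row.length := by omega
            by_cases hrne : rest = []
            · subst hrne
              simp only [List.getD_nil]
              simp only [List.length_nil]
              omega
            · exact max_le (le_trans (hrel hrne).1 (le_refl _)) hple
          · -- columns strictly increasing between new row 0 and new row 1
            intro j hj
            rw [hplen] at hj
            rcases eq_or_ne j p with rfl | hjp
            · -- new cell: value b
              rw [hpval]
              rcases eq_or_ne j i with rfl | hpi'
              · rw [getD_set_self hi]
                exact hki
              · have hpi2 : j < i := lt_of_le_of_ne hpi hpi'
                rw [getD_set_ne (Ne.symm (by omega))]
                calc row.getD j 0 ≤ k := hmin j hpi2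
                  _ < b := hki
            · rw [hpne j hjp]
              have hjlen : j < (rest.getD 0 []).length := by omega
              have hrne : rest ≠ [] := by
                intro hc
                rw [hc] at hjlen
                simp at hjlen
              obtain ⟨hl1, hl2⟩ := hrel hrne
              rcases eq_or_ne j i with rfl | hji
              · rw [getD_set_self hi]
                exact lt_trans hki (hl2 j hjlen)
              · rw [getD_set_ne (Ne.symm hji)]
                exact hl2 j hjlen
      · -- sum
        simp only [List.map_cons, List.sum_cons, hsetlen, ih2]
        omega
      · -- pointwise lengths
        intro j
        match j with
        | 0 => simp [hsetlen]
        | j + 1 => simpa using ih3 j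
      · -- length of new first row
        simp only [List.getD_cons_zero, hsetlen]
        omega
      · intro j hj
        simp only [List.getD_cons_zero]
        exact getD_set_ne (Ne.symm hj) k
      · simp only [List.getD_cons_zero]
        exact getD_set_self hi k

end InsertTabAux

/-- row insertion of a letter into a semistandard Young tableau
produces a semistandard Young tableau whose shape is obtained from the
original shape by adding exactly one box. -/
theorem insertTab_ssyt (T : List (List ℕ)) (hT : IsSSYTList T)
    (k : ℕ) (hk : 0 < k) :
    IsSSYTList (insertTab T k) ∧
      ((insertTab T k).map List.length).sum = (T.map List.length).sum + 1 ∧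
      (∀ i, (T.map List.length).getD i 0 ≤
        ((insertTab T k).map List.length).getD i 0) := by
  obtain ⟨h1, h2, h3, _⟩ := InsertTabAux.insert_main T k hT
  exact ⟨h1, h2, h3⟩
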